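/- Let X be a rate-1 continuous-time random walk on ℤ with symmetric jump kernel p, p(0)=0. Then for all t > 0, |d/dt P(X_t = 0)| ≤ t^{-1} · P(X_{t/2} = 0). -/

import Mathlib

open MeasureTheory Real

set_option maxHeartbeats 1000000

/-- Key scalar inequality: `y * exp (-t*y) ≤ t⁻¹ * exp (-(t/2)*y)` for `y ≥ 0`, `t > 0`. -/
lemma stmt6_key {y t : ℝ} (hy : 0 ≤ y) (ht : 0 < t) :
    y * Real.exp (-t * y) ≤ t⁻¹ * Real.exp (-(t / 2) * y) := by
  have h1 := Real.add_one_le_exp (t * y / 4)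
  have h2 : Real.exp (t * y / 2) = Real.exp (t * y / 4) * Real.exp (t * y / 4) := by
    rw [← Real.exp_add]; ring_nf
  have h3 : t * y ≤ Real.exp (t * y / 2) := by nlinarith [Real.exp_pos (t * y / 4), mul_nonneg ht.le hy, sq_nonneg (t * y / 4 - 1)]
  have h4 : y ≤ t⁻¹ * Real.exp (t * y / 2) := by
    rw [← mul_le_mul_iff_right₀ ht, ← mul_assoc, mul_inv_cancel₀ ht.ne', one_mul]
    exact h3
  have h5 := mul_le_mul_of_nonneg_right h4 (Real.exp_pos (-t * y)).le
  have h6 : t⁻¹ * Real.exp (t * y / 2) * Real.exp (-t * y) = t⁻¹ * Real.exp (-(t / 2) * y) := by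
    rw [mul_assoc, ← Real.exp_add]; congr 2; ring
  rw [h6] at h5
  exact h5

theorem stmt6 (p : ℤ → ℝ) (hp0 : p 0 = 0) (hpnn : ∀ z, 0 ≤ p z)
    (hpsum : ∑' z : ℤ, p z = 1) (hpsymm : ∀ z, p (-z) = p z)
    (φ : ℝ → ℝ) (hφ : ∀ u : ℝ, φ u = ∑' x : ℤ, p x * Real.cos (u * x))
    (P : ℝ → ℝ)
    (hP : ∀ t : ℝ, 0 < t →
      P t = (2 * π)⁻¹ * ∫ u in (-π)..π, Real.exp (-t * (1 - φ u))) :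
    ∀ t : ℝ, 0 < t → |deriv P t| ≤ t⁻¹ * P (t / 2) := by
  -- summability of p
  have hsum : Summable p := by
    by_contra h
    rw [tsum_eq_zero_of_not_summable h] at hpsum
    norm_num at hpsum
  have hterm : ∀ (u : ℝ) (x : ℤ), ‖p x * Real.cos (u * x)‖ ≤ p x := by
    intro u x
    rw [Real.norm_eq_abs, abs_mul, abs_of_nonneg (hpnn x)]
    calc p x * |Real.cos (u * x)| ≤ p x * 1 :=
          mul_le_mul_of_nonneg_left (Real.abs_cos_le_one _) (hpnn x)
      _ = p x := mul_one _
  have hsumm : ∀ u : ℝ, Summable fun x : ℤ => p x * Real.cos (u * x) :=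
    fun u => Summable.of_norm_bounded hsum (hterm u)
  -- φ is bounded by 1
  have hφle : ∀ u, |φ u| ≤ 1 := by
    intro u
    rw [hφ u]
    have hnsumm : Summable fun x : ℤ => ‖p x * Real.cos (u * x)‖ :=
      Summable.of_nonneg_of_le (fun x => norm_nonneg _) (hterm u) hsum
    calc |∑' x : ℤ, p x * Real.cos (u * x)| ≤ ∑' x : ℤ, ‖p x * Real.cos (u * x)‖ :=
          norm_tsum_le_tsum_norm hnsumm
      _ ≤ ∑' x : ℤ, p x := Summable.tsum_le_tsum (hterm u) hnsumm hsum
      _ = 1 := hpsum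
  have hy0 : ∀ u, 0 ≤ 1 - φ u := fun u => by
    have := (abs_le.mp (hφle u)).2; linarith
  have hy2 : ∀ u, 1 - φ u ≤ 2 := fun u => by
    have := (abs_le.mp (hφle u)).1; linarith
  -- φ is continuous
  have hφcont : Continuous φ := by
    have heq : φ = fun u => ∑' x : ℤ, p x * Real.cos (u * x) := funext hφ
    rw [heq]
    refine continuous_tsum ?_ hsum fun x u => hterm u x
    exact fun i => continuous_const.mul
      (Real.continuous_cos.comp (continuous_id.mul continuous_const))
  intro t ht
  have hπ : (0:ℝ) < π := Real.pi_pos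
  have hππ : -π ≤ π := by linarith
  -- continuity helpers
  have hcont_exp : ∀ s : ℝ, Continuous fun u => Real.exp (-s * (1 - φ u)) :=
    fun s => Real.continuous_exp.comp (continuous_const.mul (continuous_const.sub hφcont))
  have hcont_F' : Continuous fun u => -(1 - φ u) * Real.exp (-t * (1 - φ u)) :=
    ((continuous_const.sub hφcont).neg).mul (hcont_exp t)
  -- differentiation under the integral sign
  have hderiv :
      HasDerivAt (fun s => ∫ u in (-π)..π, Real.exp (-s * (1 - φ u)))
        (∫ u in (-π)..π, -(1 - φ u) * Real.exp (-t * (1 - φ u))) t := by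
    have h := intervalIntegral.hasDerivAt_integral_of_dominated_loc_of_deriv_le
      (𝕜 := ℝ) (μ := volume) (a := -π) (b := π)
      (F := fun s u => Real.exp (-s * (1 - φ u)))
      (F' := fun s u => -(1 - φ u) * Real.exp (-s * (1 - φ u)))
      (x₀ := t) (bound := fun _ => 2) (s := Metric.ball t (t / 2)) (Metric.ball_mem_nhds t (half_pos ht))
      (Filter.Eventually.of_forall fun s => ((hcont_exp s).aestronglyMeasurable).restrict)
      ((hcont_exp t).intervalIntegrable _ _)
      ((hcont_F'.aestronglyMeasurable).restrict)
      (Filter.Eventually.of_forall ?_)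
      (intervalIntegrable_const)
      (Filter.Eventually.of_forall ?_)
    · exact h.2
    · intro u _ s hs
      rw [Metric.mem_ball, Real.dist_eq] at hs
      have hs0 : 0 < s := by
        have := (abs_lt.mp hs).1; linarith
      rw [Real.norm_eq_abs, abs_mul, abs_neg, abs_of_nonneg (hy0 u), Real.abs_exp]
      have h1 : Real.exp (-s * (1 - φ u)) ≤ 1 := by
        rw [Real.exp_le_one_iff]
        have : 0 ≤ s * (1 - φ u) := mul_nonneg hs0.le (hy0 u)
        linarith
      calc (1 - φ u) * Real.exp (-s * (1 - φ u)) ≤ (1 - φ u) * 1 :=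
            mul_le_mul_of_nonneg_left h1 (hy0 u)
        _ ≤ 2 := by rw [mul_one]; exact hy2 u
    · intro u _ s _
      have hin : HasDerivAt (fun s : ℝ => -s * (1 - φ u)) (-1 * (1 - φ u)) s :=
        (hasDerivAt_id s).neg.mul_const (1 - φ u)
      have := hin.exp
      refine this.congr_deriv ?_
      ring
  -- P agrees with the integral formula near t
  have hQ : HasDerivAt P
      ((2 * π)⁻¹ * ∫ u in (-π)..π, -(1 - φ u) * Real.exp (-t * (1 - φ u))) t := by
    have h1 : HasDerivAt (fun s => (2 * π)⁻¹ * ∫ u in (-π)..π, Real.exp (-s * (1 - φ u)))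
        ((2 * π)⁻¹ * ∫ u in (-π)..π, -(1 - φ u) * Real.exp (-t * (1 - φ u))) t :=
      hderiv.const_mul _
    apply h1.congr_of_eventuallyEq
    filter_upwards [Ioi_mem_nhds ht] with s hs
    exact hP s hs
  rw [hQ.deriv]
  -- now bound
  have h2π : (0:ℝ) ≤ (2 * π)⁻¹ := by positivity
  have hbound : ∀ u : ℝ,
      |(-(1 - φ u) * Real.exp (-t * (1 - φ u)))| ≤ t⁻¹ * Real.exp (-(t / 2) * (1 - φ u)) := by
    intro u
    rw [abs_mul, abs_neg, abs_of_nonneg (hy0 u), Real.abs_exp]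
    exact stmt6_key (hy0 u) ht
  have hint1 : IntervalIntegrable (fun u => |(-(1 - φ u) * Real.exp (-t * (1 - φ u)))|)
      volume (-π) π := hcont_F'.abs.intervalIntegrable _ _
  have hint2 : IntervalIntegrable (fun u => t⁻¹ * Real.exp (-(t / 2) * (1 - φ u)))
      volume (-π) π := (continuous_const.mul (hcont_exp (t / 2))).intervalIntegrable _ _
  calc |(2 * π)⁻¹ * ∫ u in (-π)..π, -(1 - φ u) * Real.exp (-t * (1 - φ u))|
      = (2 * π)⁻¹ * |∫ u in (-π)..π, -(1 - φ u) * Real.exp (-t * (1 - φ u))| := by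
        rw [abs_mul, abs_of_nonneg h2π]
    _ ≤ (2 * π)⁻¹ * ∫ u in (-π)..π, |(-(1 - φ u) * Real.exp (-t * (1 - φ u)))| := by
        apply mul_le_mul_of_nonneg_left _ h2π
        exact intervalIntegral.abs_integral_le_integral_abs hππ
    _ ≤ (2 * π)⁻¹ * ∫ u in (-π)..π, t⁻¹ * Real.exp (-(t / 2) * (1 - φ u)) := by
        apply mul_le_mul_of_nonneg_left _ h2π
        apply intervalIntegral.integral_mono_on hππ hint1 hint2
        intro u _
        exact hbound u
    _ = t⁻¹ * P (t / 2) := by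
        rw [intervalIntegral.integral_const_mul, hP (t / 2) (half_pos ht)]
        ring
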